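/- Let (e_i)_{i∈I} be a summable family of idempotents in a ring R with a linear, Hausdorff topology, where I is well-ordered. Suppose e_i e_j ∈ J(R) whenever i < j, and that ∑_{i∈I} e_i = u is a unit of R. Then (u⁻¹e_i)_{i∈I} is a family of pairwise orthogonal idempotents with ∑_{i∈I} u⁻¹e_i = 1. -/

import Mathlib

/-- The Jacobson radical of a (possibly noncommutative) ring, as the intersection of the
maximal left ideals. -/
def jacobsonRad (R : Type*) [Ring R] : Ideal R := Ideal.jacobson ⊥
/-- A ring topology is *linear* if `0` has a neighborhood basis consisting of left ideals. -/
def HasLinearTopology (R : Type*) [Ring R] [TopologicalSpace R] : Prop :=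
  ∀ U ∈ nhds (0 : R), ∃ I : Ideal R, (I : Set R) ∈ nhds (0 : R) ∧ (I : Set R) ⊆ U


private lemma jac_left_inv {R : Type*} [Ring R] {x : R} (hx : x ∈ jacobsonRad R) :
    ∃ z : R, z * (1 - x) = 1 := by
  by_cases h : Ideal.span {1 - x} = (⊤ : Ideal R)
  · have h1 : (1 : R) ∈ Ideal.span ({1 - x} : Set R) := by rw [h]; trivial
    obtain ⟨z, hz⟩ := Submodule.mem_span_singleton.mp h1
    exact ⟨z, by simpa [smul_eq_mul] using hz⟩
  · exfalso
    obtain ⟨M, hM, hle⟩ := Ideal.exists_le_maximal _ h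
    have h1x : (1 - x) ∈ M := hle (Ideal.subset_span (Set.mem_singleton _))
    have hxM : x ∈ M := by
      have hx' : x ∈ sInf {J : Ideal R | ⊥ ≤ J ∧ J.IsMaximal} := hx
      exact (Submodule.mem_sInf.mp hx') M ⟨bot_le, hM⟩
    have hone : (1 : R) ∈ M := by
      have := M.add_mem hxM h1x
      simpa using this
    exact hM.ne_top ((Ideal.eq_top_iff_one M).mpr hone)

private lemma jac_mul_right {R : Type*} [Ring R] {x : R} (hx : x ∈ jacobsonRad R) (r : R) :
    x * r ∈ jacobsonRad R := by
  show x * r ∈ sInf {J : Ideal R | ⊥ ≤ J ∧ J.IsMaximal}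
  refine Submodule.mem_sInf.mpr ?_
  rintro M ⟨-, hMmax⟩
  by_contra hxr
  have hlt : M < M ⊔ Ideal.span {x * r} := by
    refine left_lt_sup.mpr ?_
    intro hsub
    exact hxr (hsub (Ideal.subset_span (Set.mem_singleton _)))
  have htop : M ⊔ Ideal.span {x * r} = ⊤ := (Ideal.isMaximal_def.mp hMmax).2 _ hlt
  have h1mem : (1 : R) ∈ M ⊔ Ideal.span {x * r} := by rw [htop]; trivial
  obtain ⟨m, hm, s, hs, hms⟩ := Submodule.mem_sup.mp h1mem
  obtain ⟨z, hz⟩ := Submodule.mem_span_singleton.mp hs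
  have hmz : m = 1 - z * (x * r) := by
    have h2 : m + z * (x * r) = 1 := by rw [← smul_eq_mul, hz]; exact hms
    exact eq_sub_of_add_eq h2
  have hzx : z * x ∈ jacobsonRad R := by
    simpa [smul_eq_mul] using Submodule.smul_mem (jacobsonRad R) z hx
  have hrzx : r * (z * x) ∈ jacobsonRad R := by
    simpa [smul_eq_mul] using Submodule.smul_mem (jacobsonRad R) r hzx
  obtain ⟨w, hw⟩ := jac_left_inv hrzx
  have hw' : w - w * (r * (z * x)) = 1 := by rw [mul_sub, mul_one] at hw; exact hw
  have hkey : (1 + z * x * w * r) * (1 - z * (x * r)) = 1 := by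
    have expand : (1 + z * x * w * r) * (1 - z * (x * r)) =
        1 - z * (x * r) + z * x * (w - w * (r * (z * x))) * r := by noncomm_ring
    rw [expand, hw']
    noncomm_ring
  have h1M : (1 : R) ∈ M := by
    have hsm := M.smul_mem (1 + z * x * w * r) hm
    rw [smul_eq_mul, hmz, hkey] at hsm
    exact hsm
  exact hMmax.ne_top ((Ideal.eq_top_iff_one M).mpr h1M)

private lemma elim_lemma {R : Type*} [Ring R] {A : Type*} [DecidableEq A] (L : Ideal R) :
    ∀ (S : Finset A) (x : A → R),
      (∀ α ∈ S, ∃ c : A → R, (∀ β, c β ∈ jacobsonRad R) ∧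
        x α - ∑ β ∈ S, c β * x β ∈ L) →
      ∀ α ∈ S, x α ∈ L := by
  intro S
  induction S using Finset.induction_on with
  | empty => intro x _ α hα; exact absurd hα (Finset.notMem_empty α)
  | @insert γ S' hγ ih =>
    intro x H
    obtain ⟨c0, hc0J, hc0⟩ := H γ (Finset.mem_insert_self γ S')
    rw [Finset.sum_insert hγ] at hc0
    obtain ⟨z, hz⟩ := jac_left_inv (hc0J γ)
    set m := x γ - (c0 γ * x γ + ∑ β ∈ S', c0 β * x β) with hm_def
    have hm : m ∈ L := hc0
    have hxγ : x γ = z * m + ∑ β ∈ S', (z * c0 β) * x β := by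
      have h1 : z * (x γ - c0 γ * x γ) = x γ := by
        have h2 : x γ - c0 γ * x γ = (1 - c0 γ) * x γ := by noncomm_ring
        rw [h2, ← mul_assoc, hz, one_mul]
      calc x γ = z * (x γ - c0 γ * x γ) := h1.symm
        _ = z * (m + ∑ β ∈ S', c0 β * x β) := by rw [hm_def]; congr 1; abel
        _ = z * m + ∑ β ∈ S', (z * c0 β) * x β := by
            rw [mul_add, Finset.mul_sum]
            congr 1
            exact Finset.sum_congr rfl fun β _ => by rw [← mul_assoc]
    have hS' : ∀ α ∈ S', x α ∈ L := by
      apply ih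
      intro α hα
      obtain ⟨c, hcJ, hc⟩ := H α (Finset.mem_insert_of_mem hα)
      rw [Finset.sum_insert hγ] at hc
      refine ⟨fun β => c β + c γ * (z * c0 β), fun β => ?_, ?_⟩
      · refine add_mem (hcJ β) ?_
        have := Submodule.smul_mem (jacobsonRad R) (c γ * z) (hc0J β)
        simpa [smul_eq_mul, mul_assoc] using this
      · have h2 : c γ * x γ = c γ * (z * m) + ∑ β ∈ S', c γ * ((z * c0 β) * x β) := by
          rw [hxγ, mul_add, Finset.mul_sum]
        have hexp : x α - ∑ β ∈ S', (c β + c γ * (z * c0 β)) * x β =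
            (x α - (c γ * x γ + ∑ β ∈ S', c β * x β)) + c γ * (z * m) := by
          rw [h2]
          simp only [add_mul, Finset.sum_add_distrib, mul_assoc]
          abel
        rw [hexp]
        exact add_mem hc (Ideal.mul_mem_left _ _ (Ideal.mul_mem_left _ _ hm))
    intro α hα
    rcases Finset.mem_insert.mp hα with rfl | hα'
    · rw [hxγ]
      exact add_mem (Ideal.mul_mem_left _ _ hm)
        (Submodule.sum_mem _ fun β hβ => Ideal.mul_mem_left _ _ (hS' β hβ))
    · exact hS' α hα'

private lemma hasSum_approx {M : Type*} [AddCommGroup M] [TopologicalSpace M]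
    [IsTopologicalAddGroup M] {ι : Type*} [DecidableEq ι] {f : ι → M} {s : M}
    (h : HasSum f s) (F₀ : Finset ι) {U : Set M} (hU : U ∈ nhds 0) :
    ∃ F : Finset ι, F₀ ⊆ F ∧ s - ∑ k ∈ F, f k ∈ U := by
  have ht : Filter.Tendsto (fun F : Finset ι => s - ∑ k ∈ F, f k) Filter.atTop (nhds 0) := by
    have h2 := (tendsto_const_nhds (x := s) (f := Filter.atTop (α := Finset ι))).sub h
    simpa using h2
  have hmem : {F : Finset ι | s - ∑ k ∈ F, f k ∈ U} ∈ Filter.atTop (α := Finset ι) := ht hU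
  obtain ⟨F₁, hF₁⟩ := Filter.mem_atTop_sets.mp hmem
  exact ⟨F₀ ∪ F₁, Finset.subset_union_left, hF₁ _ le_sup_right⟩

private lemma sumtail {R : Type*} [Ring R] [TopologicalSpace R] [IsTopologicalRing R]
    {ι : Type*} (M : Submodule R R) (hM : IsClosed (M : Set R)) {f : ι → R} {s : R}
    (h : HasSum f s) (F : Finset ι) (hf : ∀ k, k ∉ F → f k ∈ M) :
    s - ∑ k ∈ F, f k ∈ M := by
  classical
  have hc : HasSum (fun x : {x // x ∉ F} => f x) (s - ∑ k ∈ F, f k) := by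
    apply (Finset.hasSum_compl_iff F).mpr
    rw [sub_add_cancel]
    exact h
  exact hM.mem_of_tendsto hc
    (Filter.Eventually.of_forall fun G => Submodule.sum_mem _ fun k _ => hf k k.2)

private lemma jcdec {R : Type*} [Ring R] [TopologicalSpace R] [IsTopologicalRing R]
    (L : Ideal R) (hL : (L : Set R) ∈ nhds (0 : R)) {c : R}
    (hc : c ∈ closure ((jacobsonRad R : Ideal R) : Set R)) (y : R) :
    ∃ jj, jj ∈ jacobsonRad R ∧ c * y - jj * y ∈ L := by
  have hcont : Continuous fun r : R => (c - r) * y :=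
    (continuous_const.sub continuous_id).mul continuous_const
  have hΛ : (fun r : R => (c - r) * y) ⁻¹' (L : Set R) ∈ nhds c := by
    apply hcont.continuousAt.preimage_mem_nhds
    simpa using hL
  obtain ⟨jj, hj1, hj2⟩ := mem_closure_iff_nhds.mp hc _ hΛ
  exact ⟨jj, hj2, by simpa [sub_mul] using hj1⟩

/-- Lemma 4. Let `(e i)` be a summable family of idempotents, indexed by
a well-ordered set, in a ring with a linear Hausdorff topology.  If `e i * e j ∈ J(R)` for
`i < j` and `∑ᵢ e i = u` is a unit, then `(u⁻¹ * e i)` is a family of pairwise orthogonal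
idempotents summing to `1`. -/
theorem almost_orthogonal_idempotents_unit_sum
    (R : Type*) [Ring R] [TopologicalSpace R] [IsTopologicalRing R] [T2Space R]
    (hlin : HasLinearTopology R)
    {ι : Type*} [LinearOrder ι] [WellFoundedLT ι]
    (e : ι → R) (hidem : ∀ i, IsIdempotentElem (e i))
    (hJ : ∀ i j : ι, i < j → e i * e j ∈ jacobsonRad R)
    (u : Rˣ) (hsum : HasSum e (u : R)) :
    (∀ i, IsIdempotentElem ((↑u⁻¹ : R) * e i)) ∧
    (∀ i j, i ≠ j → ((↑u⁻¹ : R) * e i) * ((↑u⁻¹ : R) * e j) = 0) ∧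
    HasSum (fun i => (↑u⁻¹ : R) * e i) 1 := by
  classical
  set v : R := ((u⁻¹ : Rˣ) : R) with hv
  have hvu : v * (u : R) = 1 := u.inv_mul
  have huv : (u : R) * v = 1 := u.mul_inv
  haveI : ContinuousConstSMul R R :=
    ⟨fun c => by simpa [smul_eq_mul] using (continuous_mul_left c : Continuous fun x : R => c * x)⟩
  set Jc : Ideal R := (jacobsonRad R).topologicalClosure with hJc_def
  have hJcJ : ∀ {x : R}, x ∈ jacobsonRad R → x ∈ Jc :=
    fun {x} hx => Submodule.le_topologicalClosure (jacobsonRad R) hx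
  have hJcc : ∀ {x : R}, x ∈ Jc → x ∈ closure ((jacobsonRad R : Ideal R) : Set R) := by
    intro x hx
    have hEq : (Jc : Set R) = closure ((jacobsonRad R : Ideal R) : Set R) :=
      Submodule.topologicalClosure_coe (jacobsonRad R)
    rw [← hEq]
    exact hx
  have hJc_closed : IsClosed (Jc : Set R) :=
    Submodule.isClosed_topologicalClosure (jacobsonRad R)
  have hidem' : ∀ (k : ι) (x : R), e k * (e k * x) = e k * x := fun k x => by
    rw [← mul_assoc, hidem k]
  have heL : ∀ i j : ι, e i * (e i * (v * e j)) = e i * (v * e j) := fun i j => hidem' i _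
  have heR : ∀ i j : ι, (e i * (v * e j)) * e j = e i * (v * e j) := fun i j => by
    rw [mul_assoc, mul_assoc, hidem j]
  -- summation facts
  have hrow : ∀ p, HasSum (fun k => e p * (v * e k)) (e p) := by
    intro p
    have h0 := hsum.mul_left (e p * v)
    have hfun : (fun k => e p * v * e k) = fun k => e p * (v * e k) :=
      funext fun k => mul_assoc _ _ _
    have hval : e p * v * (u : R) = e p := by rw [mul_assoc, hvu, mul_one]
    rw [hfun, hval] at h0
    exact h0
  have hcol : ∀ q, HasSum (fun k => e k * (v * e q)) (e q) := by
    intro q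
    have h0 := hsum.mul_right (v * e q)
    have hval : (u : R) * (v * e q) = e q := by rw [← mul_assoc, huv, one_mul]
    rw [hval] at h0
    exact h0
  have hAsum : ∀ p q, HasSum (fun k => (e p * (v * e k)) * (e k * (v * e q)))
      (e p * (v * e q)) := by
    intro p q
    have h0 := (hsum.mul_left (e p * v)).mul_right (v * e q)
    have hfun : (fun k => e p * v * e k * (v * e q)) =
        fun k => (e p * (v * e k)) * (e k * (v * e q)) := by
      funext k
      simp only [mul_assoc]
      rw [hidem']
    have hval : e p * v * (u : R) * (v * e q) = e p * (v * e q) := by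
      rw [mul_assoc (e p) v, hvu, mul_one]
    rw [hfun, hval] at h0
    exact h0
  have hBsum : ∀ p q, HasSum (fun k => (e p * (v * e q)) * (e q * (v * e k)))
      (e p * (v * e q)) := by
    intro p q
    have h0 := (hrow q).mul_left (e p * (v * e q))
    rw [heR p q] at h0
    exact h0
  -- Step 1 : closure memberships
  have hS1 : ∀ i : ι, (∀ j, i ≠ j → e i * (v * e j) ∈ Jc) ∧ (e i - e i * (v * e i) ∈ Jc) := by
    intro i
    induction i using WellFoundedLT.induction with
    | ind i IH => ?_
    have hfam : ∀ j, HasSum (fun k => (e i * e k) * (v * e j)) (e i * e j) := by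
      intro j
      have h0 := (hsum.mul_left (e i)).mul_right (v * e j)
      have hval : e i * (u : R) * (v * e j) = e i * e j := by
        rw [mul_assoc, ← mul_assoc (u : R) v (e j), huv, one_mul]
      rw [hval] at h0
      exact h0
    have hterm : ∀ j k, k ≠ i → (k < i → k ≠ j) → (e i * e k) * (v * e j) ∈ Jc := by
      intro j k hki hkj
      rcases lt_or_gt_of_ne hki with hlt | hgt
      · have hmem : e k * (v * e j) ∈ Jc := (IH k hlt).1 j (hkj hlt)
        have hsm := Submodule.smul_mem Jc (e i) hmem
        rw [smul_eq_mul] at hsm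
        rw [mul_assoc]
        exact hsm
      · exact hJcJ (jac_mul_right (hJ i k hgt) _)
    have hdiagmem : e i - e i * (v * e i) ∈ Jc := by
      have happrox := sumtail Jc hJc_closed (hfam i) {i}
        (fun k hk => hterm i k (by simpa using hk) (fun _ => by simpa using hk))
      simpa [Finset.sum_singleton, (hidem i).eq] using happrox
    refine ⟨?_, hdiagmem⟩
    intro j hij
    rcases lt_or_gt_of_ne hij with hlt | hgt
    · -- i < j
      have happrox := sumtail Jc hJc_closed (hfam j) {i}
        (fun k hk => hterm j k (by simpa using hk) (fun hklt => ne_of_lt (hklt.trans hlt)))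
      have h2 : e i * e j - e i * (v * e j) ∈ Jc := by
        simpa [Finset.sum_singleton, (hidem i).eq] using happrox
      have h3 : e i * e j ∈ Jc := hJcJ (hJ i j hlt)
      have h4 := Submodule.sub_mem Jc h3 h2
      rwa [sub_sub_cancel] at h4
    · -- j < i
      have hij' : (i : ι) ≠ j := hij
      have happrox := sumtail Jc hJc_closed (hfam j) {i, j} (fun k hk => by
        simp only [Finset.mem_insert, Finset.mem_singleton] at hk
        push_neg at hk
        exact hterm j k hk.1 (fun _ => hk.2))
      have hSig : ∑ k ∈ ({i, j} : Finset ι), (e i * e k) * (v * e j)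
          = e i * (v * e j) + e i * (e j * (v * e j)) := by
        rw [Finset.sum_insert (by simpa using hij'), Finset.sum_singleton, hidem i, mul_assoc]
      rw [hSig] at happrox
      have hdj : e j - e j * (v * e j) ∈ Jc := (IH j hgt).2
      have h4 : e i * (e j - e j * (v * e j)) ∈ Jc := by
        have hsm := Submodule.smul_mem Jc (e i) hdj
        rwa [smul_eq_mul] at hsm
      have h5 : e i * (v * e j) = e i * (e j - e j * (v * e j))
          - (e i * e j - (e i * (v * e j) + e i * (e j * (v * e j)))) := by
        rw [mul_sub]
        abel
      rw [h5]
      exact Submodule.sub_mem Jc h4 happrox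
  have hS1off : ∀ p q : ι, p ≠ q → e p * (v * e q) ∈ Jc := fun p q h => (hS1 p).1 q h
  have hS1d : ∀ p : ι, e p - e p * (v * e p) ∈ Jc := fun p => (hS1 p).2
  -- Key per-ideal claim
  have hKey : ∀ (L : Ideal R), (L : Set R) ∈ nhds (0 : R) →
      ∀ p q : ι, p ≠ q → e p * (v * e q) ∈ L := by
    intro L hL p₀ q₀ hpq₀
    -- finite bad sets
    have hK₀fin : {k : ι | e k ∉ L}.Finite := by
      have ht := hsum.summable.tendsto_cofinite_zero
      have h1 : e ⁻¹' (L : Set R) ∈ Filter.cofinite := ht hL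
      exact Filter.mem_cofinite.mp h1
    have hcolfin : ∀ q : ι, {p : ι | e p * (v * e q) ∉ L}.Finite := by
      intro q
      have ht := (hcol q).summable.tendsto_cofinite_zero
      exact Filter.mem_cofinite.mp (ht hL)
    set K₀ : Finset ι := hK₀fin.toFinset with hK₀def
    set B : Finset (ι × ι) :=
      K₀.biUnion (fun q => ((hcolfin q).toFinset).image (fun p => (p, q))) with hBdef
    have habs : ∀ p q : ι, (p, q) ∉ B → e p * (v * e q) ∈ L := by
      intro p q hpqB
      by_cases heq : e q ∈ L
      · exact Ideal.mul_mem_left _ _ (Ideal.mul_mem_left _ _ heq)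
      · by_contra hnot
        apply hpqB
        rw [hBdef]
        refine Finset.mem_biUnion.mpr ⟨q, ?_, ?_⟩
        · rw [hK₀def]
          exact hK₀fin.mem_toFinset.mpr heq
        · exact Finset.mem_image.mpr ⟨p, (hcolfin q).mem_toFinset.mpr hnot, rfl⟩
    set X : Finset (ι × ι) := insert (p₀, q₀) (B.filter (fun β => β.1 ≠ β.2)) with hXdef
    have hXoff : ∀ α ∈ X, α.1 ≠ α.2 := by
      intro α hα
      rcases Finset.mem_insert.mp hα with rfl | hα'
      · exact hpq₀
      · exact (Finset.mem_filter.mp hα').2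
    have hXin : ∀ p q : ι, p ≠ q → (p, q) ∉ X → e p * (v * e q) ∈ L := by
      intro p q hne hX
      refine habs p q (fun hB => hX ?_)
      rw [hXdef]
      exact Finset.mem_insert_of_mem (Finset.mem_filter.mpr ⟨hB, hne⟩)
    -- the relations
    have hrel : ∀ α ∈ X, ∃ c : ι × ι → R, (∀ β, c β ∈ jacobsonRad R) ∧
        (fun β : ι × ι => e β.1 * (v * e β.2)) α
          - ∑ β ∈ X, c β * (fun β : ι × ι => e β.1 * (v * e β.2)) β ∈ L := by
      rintro ⟨p, q⟩ hαX
      have hpq : p ≠ q := hXoff _ hαX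
      obtain ⟨F₁, hF₁sub, ht₁⟩ := hasSum_approx (hAsum p q) {p, q} hL
      obtain ⟨F₂, hF₂sub, ht₂⟩ := hasSum_approx (hBsum p q) {q} hL
      have hpF₁ : p ∈ F₁ := hF₁sub (by simp)
      have hqF₁ : q ∈ F₁ := hF₁sub (by simp)
      have hqF₂ : q ∈ F₂ := hF₂sub (by simp)
      set S₁ : Finset ι := (F₁.erase p).erase q with hS₁def
      set S₂ : Finset ι := F₂.erase q with hS₂def
      have e₁ : ∑ k ∈ F₁, (e p * (v * e k)) * (e k * (v * e q)) =
          (e p * (v * e p)) * (e p * (v * e q))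
            + ((e p * (v * e q)) * (e q * (v * e q))
              + ∑ k ∈ S₁, (e p * (v * e k)) * (e k * (v * e q))) := by
        rw [← Finset.add_sum_erase _ _ hpF₁,
          ← Finset.add_sum_erase _ _ (Finset.mem_erase.mpr ⟨hpq.symm, hqF₁⟩)]
      have e₂ : ∑ k ∈ F₂, (e p * (v * e q)) * (e q * (v * e k)) =
          (e p * (v * e q)) * (e q * (v * e q))
            + ∑ k ∈ S₂, (e p * (v * e q)) * (e q * (v * e k)) := by
        rw [← Finset.add_sum_erase _ _ hqF₂]
      rw [e₁] at ht₁
      rw [e₂] at ht₂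
      obtain ⟨jd, hjdJ, hjd⟩ := jcdec L hL (hJcc (hS1d p)) (e p * (v * e q))
      have hapqJc : e p * (v * e q) ∈ closure ((jacobsonRad R : Ideal R) : Set R) :=
        hJcc (hS1off p q hpq)
      choose j2 hj2J hj2 using fun k : ι => jcdec L hL hapqJc (e q * (v * e k))
      have hj1ex : ∀ k : ι, ∃ jj, jj ∈ jacobsonRad R ∧
          (k ≠ p → (e p * (v * e k)) * (e k * (v * e q)) - jj * (e k * (v * e q)) ∈ L) := by
        intro k
        by_cases hk : k = p
        · exact ⟨0, zero_mem _, fun h => absurd hk h⟩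
        · obtain ⟨jj, h1, h2⟩ := jcdec L hL (hJcc (hS1off p k (fun h => hk h.symm)))
            (e k * (v * e q))
          exact ⟨jj, h1, fun _ => h2⟩
      choose j1 hj1J hj1 using hj1ex
      refine ⟨fun β => (if β = (p, q) then jd else 0)
          + (∑ k ∈ S₂, if β = (q, k) then (if ((q, k) : ι × ι) ∈ X then j2 k else 0) else 0)
          - (∑ k ∈ S₁, if β = (k, q) then (if ((k, q) : ι × ι) ∈ X then j1 k else 0) else 0),
        ?_, ?_⟩
      · intro β
        refine sub_mem (add_mem ?_ ?_) ?_
        · split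
          · exact hjdJ
          · exact zero_mem _
        · refine Submodule.sum_mem _ fun k _ => ?_
          split
          · split
            · exact hj2J k
            · exact zero_mem _
          · exact zero_mem _
        · refine Submodule.sum_mem _ fun k _ => ?_
          split
          · split
            · exact hj1J k
            · exact zero_mem _
          · exact zero_mem _
      · have hCsum : (∑ β ∈ X, ((if β = (p, q) then jd else 0)
              + (∑ k ∈ S₂, if β = (q, k) then (if ((q, k) : ι × ι) ∈ X then j2 k else 0) else 0)
              - (∑ k ∈ S₁, if β = (k, q) then (if ((k, q) : ι × ι) ∈ X then j1 k else 0) else 0))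
                * (e β.1 * (v * e β.2)))
            = jd * (e p * (v * e q))
              + (∑ k ∈ S₂, if ((q, k) : ι × ι) ∈ X then j2 k * (e q * (v * e k)) else 0)
              - (∑ k ∈ S₁, if ((k, q) : ι × ι) ∈ X then j1 k * (e k * (v * e q)) else 0) := by
          simp only [add_mul, sub_mul, Finset.sum_add_distrib, Finset.sum_sub_distrib]
          congr 1
          · congr 1
            · have hcongr : ∀ β ∈ X, (if β = (p, q) then jd else 0) * (e β.1 * (v * e β.2))
                  = if β = (p, q) then jd * (e β.1 * (v * e β.2)) else 0 :=
                fun β _ => by split <;> simp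
              rw [Finset.sum_congr rfl hcongr,
                Finset.sum_ite_eq' X ((p, q) : ι × ι) (fun β => jd * (e β.1 * (v * e β.2))),
                if_pos hαX]
            · rw [Finset.sum_congr rfl
                (fun β _ => Finset.sum_mul S₂ (fun k => if β = (q, k) then (if ((q, k) : ι × ι) ∈ X then j2 k else 0) else 0) (e β.1 * (v * e β.2))),
                Finset.sum_comm]
              refine Finset.sum_congr rfl fun k _ => ?_
              have hcongr : ∀ β ∈ X,
                  (if β = (q, k) then (if ((q, k) : ι × ι) ∈ X then j2 k else 0) else 0) * (e β.1 * (v * e β.2))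
                  = if β = (q, k) then (if ((q, k) : ι × ι) ∈ X then j2 k else 0) * (e β.1 * (v * e β.2)) else 0 :=
                fun β _ => by split <;> simp
              rw [Finset.sum_congr rfl hcongr, Finset.sum_ite_eq' X ((q, k) : ι × ι)]
              by_cases hmem : ((q, k) : ι × ι) ∈ X <;> simp [hmem]
          · rw [Finset.sum_congr rfl
              (fun β _ => Finset.sum_mul S₁ (fun k => if β = (k, q) then (if ((k, q) : ι × ι) ∈ X then j1 k else 0) else 0) (e β.1 * (v * e β.2))),
              Finset.sum_comm]
            refine Finset.sum_congr rfl fun k _ => ?_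
            have hcongr : ∀ β ∈ X,
                (if β = (k, q) then (if ((k, q) : ι × ι) ∈ X then j1 k else 0) else 0) * (e β.1 * (v * e β.2))
                = if β = (k, q) then (if ((k, q) : ι × ι) ∈ X then j1 k else 0) * (e β.1 * (v * e β.2)) else 0 :=
              fun β _ => by split <;> simp
            rw [Finset.sum_congr rfl hcongr, Finset.sum_ite_eq' X ((k, q) : ι × ι)]
            by_cases hmem : ((k, q) : ι × ι) ∈ X <;> simp [hmem]
        show e p * (v * e q) - _ ∈ L
        rw [hCsum]
        have hAppEq : (e p * (v * e p)) * (e p * (v * e q)) =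
            (e p * (v * e q)) - (e p - e p * (v * e p)) * (e p * (v * e q)) := by
          rw [sub_mul, heL p q]
          exact (sub_sub_cancel _ _).symm
        rw [hAppEq] at ht₁
        have hsplit2 : (∑ k ∈ S₂, (e p * (v * e q)) * (e q * (v * e k)))
            - (∑ k ∈ S₂, if ((q, k) : ι × ι) ∈ X then j2 k * (e q * (v * e k)) else 0) ∈ L := by
          rw [← Finset.sum_sub_distrib]
          refine Submodule.sum_mem _ fun k hk => ?_
          have hkq : k ≠ q := (Finset.mem_erase.mp hk).1
          by_cases hmem : ((q, k) : ι × ι) ∈ X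
          · rw [if_pos hmem]
            exact hj2 k
          · rw [if_neg hmem, sub_zero]
            exact Ideal.mul_mem_left _ _ (hXin q k (Ne.symm hkq) hmem)
        have hsplit1 : (∑ k ∈ S₁, (e p * (v * e k)) * (e k * (v * e q)))
            - (∑ k ∈ S₁, if ((k, q) : ι × ι) ∈ X then j1 k * (e k * (v * e q)) else 0) ∈ L := by
          rw [← Finset.sum_sub_distrib]
          refine Submodule.sum_mem _ fun k hk => ?_
          have hk' := Finset.mem_erase.mp hk
          have hkq : k ≠ q := hk'.1
          have hkp : k ≠ p := (Finset.mem_erase.mp hk'.2).1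
          by_cases hmem : ((k, q) : ι × ι) ∈ X
          · rw [if_pos hmem]
            exact hj1 k hkp
          · rw [if_neg hmem, sub_zero]
            exact Ideal.mul_mem_left _ _ (hXin k q hkq hmem)
        have hfinal : (e p * (v * e q)) - (jd * (e p * (v * e q))
              + (∑ k ∈ S₂, if ((q, k) : ι × ι) ∈ X then j2 k * (e q * (v * e k)) else 0)
              - (∑ k ∈ S₁, if ((k, q) : ι × ι) ∈ X then j1 k * (e k * (v * e q)) else 0)) =
            ((e p * (v * e q)) - ((e p * (v * e q)) * (e q * (v * e q))
                + ∑ k ∈ S₂, (e p * (v * e q)) * (e q * (v * e k))))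
            - ((e p * (v * e q)) - (((e p * (v * e q)) - (e p - e p * (v * e p)) * (e p * (v * e q)))
                + ((e p * (v * e q)) * (e q * (v * e q))
                  + ∑ k ∈ S₁, (e p * (v * e k)) * (e k * (v * e q)))))
            + ((e p - e p * (v * e p)) * (e p * (v * e q)) - jd * (e p * (v * e q)))
            + ((∑ k ∈ S₂, (e p * (v * e q)) * (e q * (v * e k)))
                - (∑ k ∈ S₂, if ((q, k) : ι × ι) ∈ X then j2 k * (e q * (v * e k)) else 0))
            - ((∑ k ∈ S₁, (e p * (v * e k)) * (e k * (v * e q)))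
                - (∑ k ∈ S₁, if ((k, q) : ι × ι) ∈ X then j1 k * (e k * (v * e q)) else 0)) := by
          abel
        rw [hfinal]
        exact sub_mem (add_mem (add_mem (sub_mem ht₂ ht₁) hjd) hsplit2) hsplit1
    have hfin := elim_lemma L X (fun β : ι × ι => e β.1 * (v * e β.2)) hrel (p₀, q₀)
      (Finset.mem_insert_self _ _)
    simpa using hfin
  -- zero off-diagonal
  have hzero : ∀ p q : ι, p ≠ q → e p * (v * e q) = 0 := by
    intro p q hpq
    have hcl : e p * (v * e q) ∈ closure ({(0 : R)} : Set R) := by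
      rw [mem_closure_iff]
      intro o ho hxo
      have hU : {y : R | e p * (v * e q) + y ∈ o} ∈ nhds (0 : R) := by
        have hco : Continuous fun y : R => e p * (v * e q) + y :=
          continuous_const.add continuous_id
        have h0 : e p * (v * e q) + 0 ∈ o := by simpa using hxo
        exact hco.continuousAt.preimage_mem_nhds (ho.mem_nhds h0)
      obtain ⟨I, hI0, hIU⟩ := hlin _ hU
      have hxI : e p * (v * e q) ∈ I := hKey I hI0 p q hpq
      have h0o : (0 : R) ∈ o := by
        have := hIU (I.neg_mem hxI)
        simpa using this
      exact ⟨0, h0o, rfl⟩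
    rwa [closure_singleton, Set.mem_singleton_iff] at hcl
  have hdiag : ∀ i, e i * (v * e i) = e i := by
    intro i
    have h1 : HasSum (fun k => e k * (v * e i)) (e i * (v * e i)) :=
      hasSum_single i (fun k hk => hzero k i hk)
    exact h1.unique (hcol i)
  refine ⟨?_, ?_, ?_⟩
  · intro i
    show v * e i * (v * e i) = v * e i
    rw [mul_assoc v (e i) (v * e i), hdiag i]
  · intro i j hij
    show v * e i * (v * e j) = 0
    rw [mul_assoc v (e i) (v * e j), hzero i j hij, mul_zero]
  · have h0 := hsum.mul_left v
    rwa [hvu] at h0
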